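/- If C is a minimal vertex cover of a simple hypergraph H of maximum cardinality, then there exists a semi-strongly disjoint set of bouquets B of H with F(B) = C and |F(B)| = d'_H. -/
import Mathlib


open Finset

structure SimpleHypergraph (α : Type*) [DecidableEq α] where
  edges : Finset (Finset α)
  nonempty_edges : ∀ E ∈ edges, E.Nonempty
  antichain : ∀ E ∈ edges, ∀ F ∈ edges, E ⊆ F → E = F

namespace SimpleHypergraph

variable {α : Type*} [DecidableEq α]

/-- The vertex set of a simple hypergraph: the union of its edges. -/
def verts (H : SimpleHypergraph α) : Finset α := H.edges.sup id

/-- `C` is a vertex cover: every edge meets `C`. -/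
def IsCover (H : SimpleHypergraph α) (C : Finset α) : Prop :=
  ∀ E ∈ H.edges, ∃ v ∈ E, v ∈ C

/-- `C` is a minimal vertex cover. -/
def IsMinCover (H : SimpleHypergraph α) (C : Finset α) : Prop :=
  H.IsCover C ∧ ∀ D ⊂ C, ¬ H.IsCover D

/-- `A` is independent: it contains no edge. -/
def Indep (H : SimpleHypergraph α) (A : Finset α) : Prop :=
  ∀ E ∈ H.edges, ¬ E ⊆ A

/-- The partial hypergraph of `H` on a vertex subset `U`. -/
def restrict (H : SimpleHypergraph α) (U : Finset α) : SimpleHypergraph α where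
  edges := H.edges.filter (· ⊆ U)
  nonempty_edges := fun E hE => H.nonempty_edges E (Finset.mem_filter.mp hE).1
  antichain := fun E hE F hF h =>
    H.antichain E (Finset.mem_filter.mp hE).1 F (Finset.mem_filter.mp hF).1 h

/-- The maximum cardinality of a minimal vertex cover (big height). -/
noncomputable def alpha0' (H : SimpleHypergraph α) : ℕ :=
  sSup {n : ℕ | ∃ C : Finset α, H.IsMinCover C ∧ n = C.card}

/-- A bouquet of `H`: a partial hypergraph whose edges have a common vertex,
with a designated flower in each edge belonging to no other edge. -/
structure BouquetOf (H : SimpleHypergraph α) where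
  edges : Finset (Finset α)
  edges_nonempty : edges.Nonempty
  subset : edges ⊆ H.edges
  core : ∃ v, ∀ E ∈ edges, v ∈ E
  flower : Finset α → α
  flower_spec : ∀ E ∈ edges, ∀ F ∈ edges, (flower E ∈ F ↔ E = F)

def BouquetOf.flowers {H : SimpleHypergraph α} (B : H.BouquetOf) : Finset α :=
  B.edges.image B.flower

def BouquetOf.verts {H : SimpleHypergraph α} (B : H.BouquetOf) : Finset α :=
  B.edges.sup id

/-- The union of the edge sets of a finite family of bouquets. -/
def famEdges {H : SimpleHypergraph α} {j : ℕ} (B : Fin j → H.BouquetOf) :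
    Finset (Finset α) := Finset.univ.sup fun i => (B i).edges

/-- The union of the flower sets of a finite family of bouquets. -/
def famFlowers {H : SimpleHypergraph α} {j : ℕ} (B : Fin j → H.BouquetOf) :
    Finset α := Finset.univ.sup fun i => (B i).flowers

/-- The union of the vertex sets of a finite family of bouquets. -/
def famVerts {H : SimpleHypergraph α} {j : ℕ} (B : Fin j → H.BouquetOf) :
    Finset α := Finset.univ.sup fun i => (B i).verts

/-- A semi-strongly disjoint family of bouquets of `H`. -/
def SSD (H : SimpleHypergraph α) {j : ℕ} (B : Fin j → H.BouquetOf) : Prop :=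
  (∀ p q : Fin j, p ≠ q → ∀ E ∈ (B p).edges, ∀ f ∈ (B q).flowers, f ∉ E) ∧
  H.Indep (famVerts B \ famFlowers B)

/-- `d'_H`: the maximum of `|E(𝓑)|` over semi-strongly disjoint sets of bouquets. -/
noncomputable def dPrime (H : SimpleHypergraph α) : ℕ :=
  sSup {n : ℕ | ∃ (j : ℕ) (B : Fin j → H.BouquetOf), H.SSD B ∧ n = (famEdges B).card}

/-- A minimal cover is contained in the vertex set. -/
theorem minCover_subset_verts {H : SimpleHypergraph α} {C : Finset α}
    (hC : H.IsMinCover C) : C ⊆ H.verts := by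
  intro v hv
  by_contra hvV
  refine hC.2 (C.erase v) (Finset.erase_ssubset hv) ?_
  intro E hE
  obtain ⟨u, huE, huC⟩ := hC.1 E hE
  refine ⟨u, huE, Finset.mem_erase.mpr ⟨?_, huC⟩⟩
  rintro rfl
  exact hvV (Finset.mem_sup.mpr ⟨E, hE, huE⟩)

/-- Any cover contains a minimal cover. -/
theorem exists_minCover {H : SimpleHypergraph α} (D : Finset α) (hD : H.IsCover D) :
    ∃ M ⊆ D, H.IsMinCover M := by
  induction D using Finset.strongInductionOn with
  | _ D ih =>
    by_cases h : ∃ D' ⊂ D, H.IsCover D'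
    · obtain ⟨D', hss, hcov⟩ := h
      obtain ⟨M, hM, hMmin⟩ := ih D' hss hcov
      exact ⟨M, hM.trans hss.subset, hMmin⟩
    · push_neg at h
      exact ⟨D, Finset.Subset.refl D, hD, h⟩

theorem bddAbove_alpha0' (H : SimpleHypergraph α) :
    BddAbove {n : ℕ | ∃ C : Finset α, H.IsMinCover C ∧ n = C.card} := by
  refine ⟨H.verts.card, ?_⟩
  rintro n ⟨C, hC, rfl⟩
  exact Finset.card_le_card (minCover_subset_verts hC)

theorem card_le_alpha0' {H : SimpleHypergraph α} {C : Finset α}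
    (hC : H.IsMinCover C) : C.card ≤ H.alpha0' :=
  le_csSup (bddAbove_alpha0' H) ⟨C, hC, rfl⟩

theorem flower_mem_self {H : SimpleHypergraph α} (B : H.BouquetOf) {E : Finset α}
    (hE : E ∈ B.edges) : B.flower E ∈ E :=
  (B.flower_spec E hE E hE).mpr rfl

theorem mem_famVerts_of_mem {H : SimpleHypergraph α} {j : ℕ} {B : Fin j → H.BouquetOf}
    {i : Fin j} {E : Finset α} (hE : E ∈ (B i).edges) {v : α} (hv : v ∈ E) :
    v ∈ famVerts B :=
  Finset.mem_sup.mpr ⟨i, Finset.mem_univ i, Finset.mem_sup.mpr ⟨E, hE, hv⟩⟩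

/-- Key lemma: the flower set of an SSD family is contained in a minimal cover. -/
theorem ssd_flowers_le_alpha0' {H : SimpleHypergraph α} {j : ℕ}
    (B : Fin j → H.BouquetOf) (hB : H.SSD B) :
    (famFlowers B).card ≤ H.alpha0' := by
  set D₀ : Finset α := famFlowers B ∪ (H.verts \ famVerts B) with hD₀
  have hcov : H.IsCover D₀ := by
    intro E hE
    by_cases hsub : E ⊆ famVerts B
    · have hni := hB.2 E hE
      obtain ⟨v, hvE, hv⟩ := Finset.not_subset.mp hni
      have hvF : v ∈ famFlowers B := by
        by_contra hvf
        exact hv (Finset.mem_sdiff.mpr ⟨hsub hvE, hvf⟩)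
      exact ⟨v, hvE, Finset.mem_union_left _ hvF⟩
    · obtain ⟨v, hvE, hv⟩ := Finset.not_subset.mp hsub
      exact ⟨v, hvE, Finset.mem_union_right _ (Finset.mem_sdiff.mpr
        ⟨Finset.mem_sup.mpr ⟨E, hE, hvE⟩, hv⟩)⟩
  obtain ⟨D, hDsub, hDmin⟩ := exists_minCover D₀ hcov
  have hFD : famFlowers B ⊆ D := by
    intro f hf
    obtain ⟨i, -, hfi⟩ := Finset.mem_sup.mp hf
    obtain ⟨E, hE, rfl⟩ := Finset.mem_image.mp hfi
    obtain ⟨v, hvE, hvD⟩ := hDmin.1 E ((B i).subset hE)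
    have hvD₀ := hDsub hvD
    have hvV : v ∈ famVerts B := mem_famVerts_of_mem hE hvE
    have hvF : v ∈ famFlowers B := by
      rcases Finset.mem_union.mp hvD₀ with h | h
      · exact h
      · exact absurd hvV (Finset.mem_sdiff.mp h).2
    obtain ⟨q, -, hvq⟩ := Finset.mem_sup.mp hvF
    obtain ⟨F, hF, rfl⟩ := Finset.mem_image.mp hvq
    by_cases hqi : q = i
    · subst hqi
      have := ((B q).flower_spec F hF E hE).mp hvE
      subst this
      exact hvD
    · exact absurd hvE (hB.1 i q (fun h => hqi h.symm) E hE _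
        (Finset.mem_image.mpr ⟨F, hF, rfl⟩))
  exact le_trans (Finset.card_le_card hFD) (card_le_alpha0' hDmin)

theorem ssd_edges_card_le_flowers {H : SimpleHypergraph α} {j : ℕ}
    (B : Fin j → H.BouquetOf) (hB : H.SSD B) :
    (famEdges B).card ≤ (famFlowers B).card := by
  classical
  rcases Finset.eq_empty_or_nonempty (famEdges B) with h | ⟨E0, hE0⟩
  · simp [h]
  have key : ∀ E ∈ famEdges B, ∃ i : Fin j, E ∈ (B i).edges := by
    intro E hE
    obtain ⟨i, -, hEi⟩ := Finset.mem_sup.mp hE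
    exact ⟨i, hEi⟩
  obtain ⟨i0, hi0⟩ := key E0 hE0
  obtain ⟨a0, -⟩ := H.nonempty_edges E0 ((B i0).subset hi0)
  set f : Finset α → α := fun E =>
    if h : ∃ i : Fin j, E ∈ (B i).edges then (B h.choose).flower E else a0 with hf
  refine Finset.card_le_card_of_injOn f ?_ ?_
  · intro E hE
    have h := key E hE
    simp only [hf, dif_pos h]
    exact Finset.mem_sup.mpr ⟨h.choose, Finset.mem_univ _,
      Finset.mem_image.mpr ⟨E, h.choose_spec, rfl⟩⟩
  · intro E hE F hF hEF
    have hEex := key E hE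
    have hFex := key F hF
    simp only [hf, dif_pos hEex, dif_pos hFex] at hEF
    set p := hEex.choose with hp
    set q := hFex.choose with hq
    have hEp : E ∈ (B p).edges := hEex.choose_spec
    have hFq : F ∈ (B q).edges := hFex.choose_spec
    have hfFE : (B q).flower F ∈ E := hEF ▸ flower_mem_self (B p) hEp
    by_cases hpq : p = q
    · have hEq : E ∈ (B q).edges := hpq ▸ hEp
      exact (((B q).flower_spec F hFq E hEq).mp hfFE).symm
    · exact absurd hfFE (hB.1 p q hpq E hEp _ (Finset.mem_image.mpr ⟨F, hFq, rfl⟩))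

theorem ssd_card_le_alpha0' {H : SimpleHypergraph α} {j : ℕ}
    (B : Fin j → H.BouquetOf) (hB : H.SSD B) :
    (famEdges B).card ≤ H.alpha0' :=
  le_trans (ssd_edges_card_le_flowers B hB) (ssd_flowers_le_alpha0' B hB)

theorem ssd_zero (H : SimpleHypergraph α) : H.SSD (Fin.elim0 : Fin 0 → H.BouquetOf) := by
  constructor
  · intro p; exact p.elim0
  · intro E hE hsub
    obtain ⟨v, hv⟩ := H.nonempty_edges E hE
    have := hsub hv
    simp [famVerts, famFlowers] at this

theorem dPrime_le_alpha0' (H : SimpleHypergraph α) : H.dPrime ≤ H.alpha0' := by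
  refine csSup_le ⟨0, 0, Fin.elim0, ssd_zero H, by simp [famEdges]⟩ ?_
  rintro n ⟨j, B, hB, rfl⟩
  exact ssd_card_le_alpha0' B hB

theorem bddAbove_dPrime (H : SimpleHypergraph α) :
    BddAbove {n : ℕ | ∃ (j : ℕ) (B : Fin j → H.BouquetOf),
      H.SSD B ∧ n = (famEdges B).card} := by
  refine ⟨H.alpha0', ?_⟩
  rintro n ⟨j, B, hB, rfl⟩
  exact ssd_card_le_alpha0' B hB

end SimpleHypergraph

open SimpleHypergraph in
/-- a minimal vertex cover of maximum cardinality is the flower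
set of a semi-strongly disjoint set of bouquets realizing `d'_H`. -/
theorem stmt10 {α : Type*} [DecidableEq α] (H : SimpleHypergraph α)
    (C : Finset α) (hC : H.IsMinCover C) (hmax : C.card = H.alpha0') :
    ∃ (j : ℕ) (B : Fin j → H.BouquetOf),
      H.SSD B ∧ famFlowers B = C ∧ (famFlowers B).card = H.dPrime := by
  classical
  -- for each v ∈ C pick an edge meeting C only in v
  have key : ∀ v ∈ C, ∃ E ∈ H.edges, v ∈ E ∧ ∀ w ∈ E, w ∈ C → w = v := by
    intro v hv
    have hnc : ¬ H.IsCover (C.erase v) := hC.2 _ (Finset.erase_ssubset hv)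
    rw [IsCover] at hnc
    push_neg at hnc
    obtain ⟨E, hE, hEe⟩ := hnc
    have hall : ∀ w ∈ E, w ∈ C → w = v := by
      intro w hwE hwC
      have h := hEe w hwE
      rw [Finset.mem_erase] at h
      by_contra hne
      exact h ⟨hne, hwC⟩
    obtain ⟨u, huE, huC⟩ := hC.1 E hE
    exact ⟨E, hE, hall u huE huC ▸ huE, hall⟩
  choose Ev hEv1 hEv2 hEv3 using key
  set e : Fin C.card ≃ {x // x ∈ C} := C.equivFin.symm with he
  set Bi : Fin C.card → H.BouquetOf := fun i =>
    { edges := {Ev (e i : α) (e i).2}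
      edges_nonempty := Finset.singleton_nonempty _
      subset := by
        intro E hE
        rw [Finset.mem_singleton] at hE
        exact hE ▸ hEv1 _ _
      core := ⟨(e i : α), by
        intro E hE
        rw [Finset.mem_singleton] at hE
        exact hE ▸ hEv2 _ _⟩
      flower := fun _ => (e i : α)
      flower_spec := by
        intro E hE F hF
        rw [Finset.mem_singleton] at hE hF
        subst hE; subst hF
        simp [hEv2] } with hBi
  have hflowers : ∀ i, (Bi i).flowers = {(e i : α)} := by
    intro i
    simp [BouquetOf.flowers, hBi]
  have hfamF : famFlowers Bi = C := by
    ext x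
    simp only [famFlowers, Finset.mem_sup, Finset.mem_univ, true_and, hflowers,
      Finset.mem_singleton]
    constructor
    · rintro ⟨i, rfl⟩; exact (e i).2
    · intro hx; exact ⟨e.symm ⟨x, hx⟩, by simp⟩
  have hSSD : H.SSD Bi := by
    constructor
    · intro p q hpq E hE f hf
      rw [hflowers, Finset.mem_singleton] at hf
      subst hf
      simp only [hBi, Finset.mem_singleton] at hE
      subst hE
      intro hmem
      have := hEv3 _ (e p).2 _ hmem (e q).2
      have : e q = e p := Subtype.ext this
      exact hpq (e.injective this).symm
    · intro E hE hsub
      obtain ⟨u, huE, huC⟩ := hC.1 E hE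
      have := hsub huE
      rw [Finset.mem_sdiff, hfamF] at this
      exact this.2 huC
  have hinjEv : Function.Injective (fun i : Fin C.card => Ev (e i : α) (e i).2) := by
    intro i j hij
    simp only at hij
    have h1 : (e i : α) ∈ Ev (e j : α) (e j).2 := hij ▸ hEv2 _ _
    have h2 := hEv3 _ (e j).2 _ h1 (e i).2
    exact e.injective (Subtype.ext h2)
  have hfamE : (famEdges Bi).card = C.card := by
    have : famEdges Bi = Finset.univ.image (fun i : Fin C.card => Ev (e i : α) (e i).2) := by
      ext E
      simp only [famEdges, Finset.mem_sup, Finset.mem_univ, true_and, Finset.mem_image, hBi,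
        Finset.mem_singleton]
      exact ⟨fun ⟨i, h⟩ => ⟨i, h.symm⟩, fun ⟨i, h⟩ => ⟨i, h.symm⟩⟩
    rw [this, Finset.card_image_of_injective _ hinjEv, Finset.card_univ, Fintype.card_fin]
  have hle : C.card ≤ H.dPrime :=
    le_csSup (bddAbove_dPrime H) ⟨C.card, Bi, hSSD, hfamE.symm⟩
  have hge : H.dPrime ≤ C.card := hmax ▸ dPrime_le_alpha0' H
  exact ⟨C.card, Bi, hSSD, hfamF, by rw [hfamF]; omega⟩
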